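/- Let G be a nonzero Hermitian d×d complex matrix with trace zero, and let |G| denote the positive semidefinite square root of G². Then tr|G| > 0, and there exist positive semidefinite d×d matrices ρ₀ and ρ₁, each of trace one, satisfying ρ₀ρ₁ = 0, such that G = (1/2)·tr|G|·(ρ₀ − ρ₁). -/

import Mathlib

open ComplexOrder

open ComplexOrder Matrix

/-- The positive semidefinite square root of a positive semidefinite matrix
(the definition `Matrix.PosSemidef.sqrt` of Mathlib, Dec 2024, since removed). -/
noncomputable def Matrix.PosSemidef.sqrt {n : Type*} [Fintype n] [DecidableEq n] {𝕜 : Type*}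
    [RCLike 𝕜] {A : Matrix n n 𝕜} (hA : A.PosSemidef) : Matrix n n 𝕜 :=
  hA.1.eigenvectorUnitary.1 * Matrix.diagonal ((↑) ∘ (√·) ∘ hA.1.eigenvalues) *
  (star hA.1.eigenvectorUnitary : Matrix n n 𝕜)


section sqrtaux
open scoped MatrixOrder

lemma Matrix.PosSemidef.sqrt_eq_cfc_sqrt {d : ℕ} {A : Matrix (Fin d) (Fin d) ℂ}
    (hA : A.PosSemidef) : hA.sqrt = CFC.sqrt A := by
  rw [CFC.sqrt_eq_cfc, cfc_nnreal_eq_real _ A, hA.1.cfc_eq]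
  simp only [Matrix.PosSemidef.sqrt, IsHermitian.cfc]
  congr 3
  funext i
  simp [Real.coe_toNNReal', hA.eigenvalues_nonneg i]

lemma Matrix.PosSemidef.eq_sqrt_of_sq_eq {d : ℕ} {B A : Matrix (Fin d) (Fin d) ℂ}
    (hB : B.PosSemidef) (hA : A.PosSemidef) (h : B ^ 2 = A) : B = hA.sqrt := by
  rw [hA.sqrt_eq_cfc_sqrt, ← h, CFC.sqrt_sq B hB.nonneg]

end sqrtaux


section aux
variable {d : ℕ} (U : Matrix (Fin d) (Fin d) ℂ)

/-- conjugation by U of a real diagonal -/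
noncomputable def cfun (f : Fin d → ℝ) : Matrix (Fin d) (Fin d) ℂ :=
  U * Matrix.diagonal ((↑) ∘ f) * star U

lemma cfun_mul (hU : star U * U = 1) (f g : Fin d → ℝ) :
    cfun U f * cfun U g = cfun U (f * g) := by
  simp only [cfun]
  have : Matrix.diagonal ((↑) ∘ f : Fin d → ℂ) * Matrix.diagonal ((↑) ∘ g) =
      Matrix.diagonal ((↑) ∘ (f * g)) := by
    have h1 : ((↑) ∘ (f * g) : Fin d → ℂ) = ((↑) ∘ f) * ((↑) ∘ g) := by funext i; simp
    rw [h1]; exact Matrix.diagonal_mul_diagonal _ _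
  calc U * Matrix.diagonal ((↑) ∘ f) * star U * (U * Matrix.diagonal ((↑) ∘ g) * star U)
      = U * (Matrix.diagonal ((↑) ∘ f) * ((star U * U) * Matrix.diagonal ((↑) ∘ g))) * star U := by
        simp only [Matrix.mul_assoc]
    _ = U * Matrix.diagonal ((↑) ∘ (f * g)) * star U := by
        rw [hU, Matrix.one_mul, this, Matrix.mul_assoc]

lemma cfun_sub (f g : Fin d → ℝ) : cfun U f - cfun U g = cfun U (f - g) := by
  simp only [cfun]
  have h1 : ((↑) ∘ (f - g) : Fin d → ℂ) = fun i => ((↑) ∘ f : Fin d → ℂ) i - ((↑) ∘ g : Fin d → ℂ) i := by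
    funext i; simp
  rw [h1, ← Matrix.diagonal_sub, Matrix.mul_sub, Matrix.sub_mul]

lemma cfun_smul (c : ℝ) (f : Fin d → ℝ) :
    cfun U (fun i => c * f i) = (c : ℂ) • cfun U f := by
  simp only [cfun]
  have h1 : ((↑) ∘ (fun i => c * f i) : Fin d → ℂ) = (c : ℂ) • ((↑) ∘ f) := by
    funext i; simp
  rw [h1, Matrix.diagonal_smul, Matrix.mul_smul, Matrix.smul_mul]

lemma cfun_trace (hU : star U * U = 1) (f : Fin d → ℝ) :
    (cfun U f).trace = ((∑ i, f i : ℝ) : ℂ) := by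
  simp only [cfun]
  rw [Matrix.trace_mul_cycle, hU, Matrix.one_mul, Matrix.trace_diagonal]
  push_cast; rfl

lemma cfun_posSemidef (hU : star U * U = 1) (f : Fin d → ℝ) (hf : ∀ i, 0 ≤ f i) :
    (cfun U f).PosSemidef := by
  have hd : (Matrix.diagonal ((↑) ∘ f : Fin d → ℂ)).PosSemidef := by
    rw [Matrix.posSemidef_diagonal_iff]
    intro i
    simpa using (by exact_mod_cast hf i : (0:ℂ) ≤ ((f i : ℝ) : ℂ))
  simpa [cfun, Matrix.mul_assoc, Matrix.star_eq_conjTranspose] using hd.mul_mul_conjTranspose_same U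

end aux



/-- Let `G` be a nonzero Hermitian `d×d` complex matrix with trace zero, and
let `|G|` denote the positive semidefinite square root of `G²` (here `hsq.sqrt`, where `hsq`
witnesses that `G²` is positive semidefinite — which is automatic for Hermitian `G`).
Then `tr|G| > 0` (in the complex order, i.e. real and positive), and there exist positive
semidefinite matrices `ρ₀, ρ₁`, each of trace one, with `ρ₀ρ₁ = 0`, such that
`G = (1/2)·tr|G|·(ρ₀ − ρ₁)`. -/
theorem stmt0 (d : ℕ) (G : Matrix (Fin d) (Fin d) ℂ) (hG : G.IsHermitian)
    (hne : G ≠ 0) (htr : G.trace = 0) (hsq : (G ^ 2).PosSemidef) :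
    0 < hsq.sqrt.trace ∧
    ∃ ρ₀ ρ₁ : Matrix (Fin d) (Fin d) ℂ,
      ρ₀.PosSemidef ∧ ρ₁.PosSemidef ∧ ρ₀.trace = 1 ∧ ρ₁.trace = 1 ∧ ρ₀ * ρ₁ = 0 ∧
      G = ((1 : ℂ) / 2 * hsq.sqrt.trace) • (ρ₀ - ρ₁) := by
  set U : Matrix (Fin d) (Fin d) ℂ := (hG.eigenvectorUnitary : Matrix (Fin d) (Fin d) ℂ) with hUdef
  have hU : star U * U = 1 := Matrix.mem_unitaryGroup_iff'.mp hG.eigenvectorUnitary.2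
  set lam := hG.eigenvalues with hlam
  have hGeq : G = cfun U lam := hG.spectral_theorem
  -- absolute value
  set a : Fin d → ℝ := fun i => |lam i| with ha
  have hA : (cfun U a).PosSemidef := cfun_posSemidef U hU a fun i => abs_nonneg _
  have hAsq : (cfun U a) ^ 2 = G ^ 2 := by
    rw [pow_two, pow_two, cfun_mul U hU, hGeq, cfun_mul U hU]
    have h2 : a * a = lam * lam := by funext i; simp [ha, abs_mul_abs_self]
    rw [h2]
  have hsqrt : hsq.sqrt = cfun U a := (hA.eq_sqrt_of_sq_eq hsq hAsq).symm
  set t : ℝ := ∑ i, a i with ht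
  have htrA : hsq.sqrt.trace = (t : ℂ) := by rw [hsqrt, cfun_trace U hU]
  have htnonneg : 0 ≤ t := Finset.sum_nonneg fun i _ => abs_nonneg _
  have htne : t ≠ 0 := by
    intro h0
    apply hne
    have hall : ∀ i, lam i = 0 := by
      intro i
      have := (Finset.sum_eq_zero_iff_of_nonneg (fun i _ => abs_nonneg (lam i))).mp h0 i
        (Finset.mem_univ i)
      exact abs_eq_zero.mp this
    have : lam = 0 := funext hall
    rw [hGeq, this]
    show U * Matrix.diagonal ((↑) ∘ (0 : Fin d → ℝ)) * star U = 0
    have h3 : ((↑) ∘ (0 : Fin d → ℝ) : Fin d → ℂ) = fun _ => (0:ℂ) := by funext i; simp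
    rw [h3, Matrix.diagonal_zero, Matrix.mul_zero, Matrix.zero_mul]
  have htpos : 0 < t := lt_of_le_of_ne htnonneg (Ne.symm htne)
  have hsum0 : ∑ i, lam i = 0 := by
    have := htr
    rw [hGeq, cfun_trace U hU] at this
    exact_mod_cast this
  -- positive and negative parts
  set p : Fin d → ℝ := fun i => max (lam i) 0 with hp
  set m : Fin d → ℝ := fun i => max (-lam i) 0 with hm
  have hpm_sub : ∀ i, p i - m i = lam i := fun i => by
    rcases le_total (lam i) 0 with h | h <;> simp [hp, hm, max_eq_left, max_eq_right, h] <;> linarith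
  have hpm_add : ∀ i, p i + m i = a i := fun i => by
    rcases le_total (lam i) 0 with h | h
    · simp [hp, hm, ha, abs_of_nonpos h, max_eq_right h, max_eq_left (neg_nonneg.mpr h)]
    · simp [hp, hm, ha, abs_of_nonneg h, max_eq_left h, max_eq_right (neg_nonpos.mpr h)]
  have hsum_p_add : ∑ i, p i + ∑ i, m i = t := by
    rw [← Finset.sum_add_distrib]; exact Finset.sum_congr rfl fun i _ => hpm_add i
  have hsum_p_sub : ∑ i, p i - ∑ i, m i = 0 := by
    rw [← Finset.sum_sub_distrib]
    rw [Finset.sum_congr rfl fun i _ => hpm_sub i]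
    exact hsum0
  have hsp : ∑ i, p i = t / 2 := by linarith
  have hsm : ∑ i, m i = t / 2 := by linarith
  refine ⟨by rw [htrA]; exact_mod_cast htpos, ?_⟩
  refine ⟨cfun U (fun i => 2 / t * p i), cfun U (fun i => 2 / t * m i), ?_, ?_, ?_, ?_, ?_, ?_⟩
  · exact cfun_posSemidef U hU _ fun i =>
      mul_nonneg (by positivity) (le_max_right _ _)
  · exact cfun_posSemidef U hU _ fun i =>
      mul_nonneg (by positivity) (le_max_right _ _)
  · rw [cfun_trace U hU, ← Finset.mul_sum, hsp]
    field_simp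
    norm_num
  · rw [cfun_trace U hU, ← Finset.mul_sum, hsm]
    field_simp
    norm_num
  · rw [cfun_mul U hU]
    have : ((fun i => 2 / t * p i) * fun i => 2 / t * m i) = fun _ => (0:ℝ) := by
      ext i
      have : p i * m i = 0 := by
        rcases le_total (lam i) 0 with h | h
        · simp [hp, max_eq_right h]
        · simp [hm, max_eq_right (neg_nonpos.mpr h)]
      simp only [Pi.mul_apply]
      ring_nf
      rw [mul_assoc, mul_comm (m i)] at *
      nlinarith [this]
    rw [this]
    show U * Matrix.diagonal ((↑) ∘ (fun _ => (0:ℝ))) * star U = 0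
    have h3 : ((↑) ∘ (fun _ => (0:ℝ)) : Fin d → ℂ) = fun _ => (0:ℂ) := by funext i; simp
    rw [h3, Matrix.diagonal_zero, Matrix.mul_zero, Matrix.zero_mul]
  · rw [cfun_sub, htrA]
    have hfeq : ((fun i => 2 / t * p i) - fun i => 2 / t * m i) = fun i => 2 / t * lam i := by
      ext i; simp only [Pi.sub_apply]; rw [← mul_sub, hpm_sub]
    rw [hfeq, cfun_smul, ← hGeq, smul_smul]
    have hc : (1 : ℂ) / 2 * (t : ℂ) * ((2 / t : ℝ) : ℂ) = 1 := by
      have : (t : ℂ) ≠ 0 := by exact_mod_cast htne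
      push_cast
      field_simp
    rw [hc, one_smul]
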